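/- arXiv:2512.09186 — 3 statements merged into one kernel-verified Lean document; each statement's English description precedes it below -/
import Mathlib

section
/- For all positive integers s and t, the Ramsey number R(s,t) satisfies R(s,t) ≤ C(s+t-2, t-1), i.e., every graph on C(s+t-2, t-1) vertices contains an independent set of size s or a clique of size t. -/
open Finset

universe u

lemma my_map_clique {V : Type u} (G : SimpleGraph V) (A : Set V) {k : ℕ} {S : Finset ↥A}
    (h : (SimpleGraph.induce A G).IsNClique k S) :
    G.IsNClique k (S.map (Function.Embedding.subtype _)) := by
  constructor
  · intro x hx y hy hxy
    simp only [Finset.coe_map, Set.mem_image, Finset.mem_coe,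
      Function.Embedding.coe_subtype] at hx hy
    obtain ⟨a, ha, rfl⟩ := hx
    obtain ⟨b, hb, rfl⟩ := hy
    exact h.1 ha hb (fun h' => hxy (congrArg _ h'))
  · rw [Finset.card_map, h.2]

lemma ramsey_aux : ∀ n s t : ℕ, s + t ≤ n → 1 ≤ s → 1 ≤ t →
    ∀ (V : Type u) [Fintype V] (G : SimpleGraph V),
    Nat.choose (s + t - 2) (t - 1) ≤ Fintype.card V →
    (∃ S : Finset V, S.card = s ∧ ∀ u ∈ S, ∀ w ∈ S, u ≠ w → ¬ G.Adj u w) ∨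
    (∃ S : Finset V, G.IsNClique t S) := by
  intro n
  induction n using Nat.strong_induction_on with
  | _ n IH =>
  intro s t hn hs ht V _ G hcard
  classical
  have hpos : 0 < Fintype.card V := lt_of_lt_of_le (Nat.choose_pos (by omega)) hcard
  have : Nonempty V := Fintype.card_pos_iff.mp hpos
  obtain ⟨v⟩ := this
  rcases eq_or_lt_of_le hs with hs1 | hs2
  · -- s = 1
    left
    exact ⟨{v}, by simp [← hs1], by simp⟩
  rcases eq_or_lt_of_le ht with ht1 | ht2
  · -- t = 1
    right
    refine ⟨{v}, ?_, by simp [← ht1]⟩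
    simp [SimpleGraph.IsClique]
  -- s, t ≥ 2
  obtain ⟨a, rfl⟩ : ∃ a, s = a + 2 := ⟨s - 2, by omega⟩
  obtain ⟨b, rfl⟩ : ∃ b, t = b + 2 := ⟨t - 2, by omega⟩
  set A : Finset V := Finset.univ.filter (fun w => w ≠ v ∧ ¬ G.Adj v w) with hA
  set B : Finset V := Finset.univ.filter (fun w => G.Adj v w) with hB
  have hvA : v ∉ A := by simp [hA]
  have hvB : v ∉ B := by simp [hB]
  have hdisj : Disjoint A B := by
    rw [Finset.disjoint_left]
    intro x hx hx'
    simp [hA] at hx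
    simp [hB] at hx'
    exact hx.2 hx'
  have hunion : A ∪ B = Finset.univ.erase v := by
    ext x
    simp only [Finset.mem_union, hA, hB, Finset.mem_filter, Finset.mem_univ, true_and,
      Finset.mem_erase, and_true]
    constructor
    · rintro (⟨h1, _⟩ | h2)
      · exact h1
      · exact fun h => (G.irrefl (h ▸ h2))
    · intro hx
      by_cases h : G.Adj v x
      · exact Or.inr h
      · exact Or.inl ⟨hx, h⟩
  have hcards : A.card + B.card + 1 = Fintype.card V := by
    have := Finset.card_union_of_disjoint hdisj
    rw [hunion, Finset.card_erase_of_mem (Finset.mem_univ v), Finset.card_univ] at this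
    omega
  have hpascal : Nat.choose (a + b + 2) (b + 1)
      = Nat.choose (a + b + 1) b + Nat.choose (a + b + 1) (b + 1) := by
    simpa using Nat.choose_succ_succ (a + b + 1) b
  have hsimp : a + 2 + (b + 2) - 2 = a + b + 2 := by omega
  rw [hsimp] at hcard
  have hsimp2 : b + 2 - 1 = b + 1 := by omega
  rw [hsimp2, hpascal] at hcard
  have hcase : Nat.choose (a + b + 1) (b + 1) ≤ A.card ∨ Nat.choose (a + b + 1) b ≤ B.card := by
    omega
  rcases hcase with hAc | hBc
  · -- use A with (s-1, t)
    have key := IH (n - 1) (by omega) (a + 1) (b + 2) (by omega) (by omega) (by omega)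
      (↥(A : Set V)) (SimpleGraph.induce (A : Set V) G)
      (by
        have h1 : a + 1 + (b + 2) - 2 = a + b + 1 := by omega
        have h2 : b + 2 - 1 = b + 1 := by omega
        rw [h1, h2]
        simpa using hAc)
    rcases key with ⟨S', hS'card, hS'ind⟩ | ⟨S', hS'⟩
    · left
      refine ⟨insert v (S'.map (Function.Embedding.subtype _)), ?_, ?_⟩
      · have hvnot : v ∉ S'.map (Function.Embedding.subtype _) := by
          intro hv
          simp only [Finset.mem_map, Function.Embedding.coe_subtype] at hv
          obtain ⟨⟨x, hx⟩, _, heq⟩ := hv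
          simp [hA] at hx
          exact hx.1 heq
        rw [Finset.card_insert_of_notMem hvnot, Finset.card_map, hS'card]
      · intro u hu w hw huw
        have memA : ∀ x, x ∈ S'.map (Function.Embedding.subtype _) → x ∈ A := by
          intro x hx
          simp only [Finset.mem_map, Function.Embedding.coe_subtype] at hx
          obtain ⟨⟨y, hy⟩, _, rfl⟩ := hx
          simpa using hy
        have nadjv : ∀ x, x ∈ A → ¬ G.Adj v x := by
          intro x hx; simp [hA] at hx; exact hx.2
        rcases Finset.mem_insert.mp hu with rfl | hu'
        · rcases Finset.mem_insert.mp hw with rfl | hw'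
          · exact absurd rfl huw
          · exact nadjv w (memA w hw')
        · rcases Finset.mem_insert.mp hw with rfl | hw'
          · intro h; exact nadjv u (memA u hu') h.symm
          · -- both in mapped set
            simp only [Finset.mem_map, Function.Embedding.coe_subtype] at hu' hw'
            obtain ⟨x, hx, rfl⟩ := hu'
            obtain ⟨y, hy, rfl⟩ := hw'
            intro h
            exact hS'ind x hx y hy (fun h' => huw (congrArg _ h')) h
    · right
      exact ⟨S'.map (Function.Embedding.subtype _), my_map_clique G _ hS'⟩
  · -- use B with (s, t-1)
    have key := IH (n - 1) (by omega) (a + 2) (b + 1) (by omega) (by omega) (by omega)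
      (↥(B : Set V)) (SimpleGraph.induce (B : Set V) G)
      (by
        have h1 : a + 2 + (b + 1) - 2 = a + b + 1 := by omega
        have h2 : b + 1 - 1 = b := by omega
        rw [h1, h2]
        simpa using hBc)
    rcases key with ⟨S', hS'card, hS'ind⟩ | ⟨S', hS'⟩
    · left
      refine ⟨S'.map (Function.Embedding.subtype _), by rw [Finset.card_map, hS'card], ?_⟩
      intro u hu w hw huw
      simp only [Finset.mem_map, Function.Embedding.coe_subtype] at hu hw
      obtain ⟨x, hx, rfl⟩ := hu
      obtain ⟨y, hy, rfl⟩ := hw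
      exact hS'ind x hx y hy (fun h' => huw (congrArg _ h'))
    · right
      have hmap := my_map_clique G _ hS'
      refine ⟨insert v (S'.map (Function.Embedding.subtype _)), ?_, ?_⟩
      · intro x hx y hy hxy
        have adjv : ∀ z ∈ S'.map (Function.Embedding.subtype _), G.Adj v z := by
          intro z hz
          simp only [Finset.mem_map, Function.Embedding.coe_subtype] at hz
          obtain ⟨⟨w, hw⟩, _, rfl⟩ := hz
          simp [hB] at hw
          exact hw
        simp only [Finset.coe_insert, Set.mem_insert_iff, Finset.mem_coe] at hx hy
        rcases hx with rfl | hx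
        · rcases hy with rfl | hy
          · exact absurd rfl hxy
          · exact adjv y hy
        · rcases hy with rfl | hy
          · exact (adjv x hx).symm
          · exact hmap.1 hx hy hxy
      · have hvnot : v ∉ S'.map (Function.Embedding.subtype _) := by
          intro hv
          simp only [Finset.mem_map, Function.Embedding.coe_subtype] at hv
          obtain ⟨⟨w, hw⟩, _, heq⟩ := hv
          simp [hB] at hw
          exact G.irrefl (heq ▸ hw)
        rw [Finset.card_insert_of_notMem hvnot, Finset.card_map, hS'.2]

/-- **Erdős–Szekeres bound**: for all positive integers `s, t`, every simple graph on
`C(s+t-2, t-1)` vertices contains an independent set of size `s` or a clique of size `t`. -/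
theorem ramsey_erdos_szekeres_bound (s t : ℕ) (hs : 1 ≤ s) (ht : 1 ≤ t)
    (V : Type*) [Fintype V] (G : SimpleGraph V)
    (hcard : Fintype.card V = Nat.choose (s + t - 2) (t - 1)) :
    (∃ S : Finset V, S.card = s ∧ ∀ u ∈ S, ∀ w ∈ S, u ≠ w → ¬ G.Adj u w) ∨
    (∃ S : Finset V, G.IsNClique t S) := by
  exact ramsey_aux (s + t) s t le_rfl hs ht V G hcard.ge
end

section
/- For all n ≥ 3 and ω ≥ 1, every C4-free graph on at least C(n,2)·(ω-1) + n vertices contains an independent set of size n or a clique of size ω+1. -/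
open Finset

/-- For all `n ≥ 3` and `ω ≥ 1`, every `C₄`-free graph (no induced 4-cycle) on at least
`C(n,2)·(ω-1) + n` vertices contains an independent set of size `n` or a clique of size `ω+1`. -/
theorem c4_free_ramsey_bound (n ω : ℕ) (hn : 3 ≤ n) (hω : 1 ≤ ω)
    (V : Type*) [Fintype V] (G : SimpleGraph V)
    (hC4 : ¬ Nonempty (SimpleGraph.cycleGraph 4 ↪g G))
    (hcard : Nat.choose n 2 * (ω - 1) + n ≤ Fintype.card V) :
    (∃ S : Finset V, S.card = n ∧ ∀ u ∈ S, ∀ w ∈ S, u ≠ w → ¬ G.Adj u w) ∨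
    (∃ S : Finset V, G.IsNClique (ω + 1) S) := by
  classical
  obtain ⟨k, rfl⟩ : ∃ k, ω = k + 1 := ⟨ω - 1, (Nat.succ_pred_eq_of_pos hω).symm⟩
  -- induced C4 freeness, unpacked
  have hC4' : ∀ a b x y : V, a ≠ b → x ≠ y → ¬ G.Adj a b → ¬ G.Adj x y → G.Adj a x →
      G.Adj x b → G.Adj b y → G.Adj y a → False := by
    intro a b x y hab hxy nab nxy hax hxb hby hya
    apply hC4
    refine ⟨⟨![a, x, b, y], ?_⟩, ?_⟩
    · intro i j hij
      fin_cases i <;> fin_cases j <;> simp_all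
    · intro i j
      fin_cases i <;> fin_cases j <;> constructor <;> intro h <;>
        first
          | decide
          | assumption
          | exact hax.symm
          | exact hxb.symm
          | exact hby.symm
          | exact hya.symm
          | exact hax
          | exact hxb
          | exact hby
          | exact hya
          | exact absurd h (by decide)
          | exact absurd h nab
          | exact absurd h nxy
          | exact absurd h.symm nab
          | exact absurd h.symm nxy
          | exact absurd h (G.irrefl)
  -- maximum independent set
  set F : Finset (Finset V) :=
    univ.powerset.filter (fun S => ∀ u ∈ S, ∀ w ∈ S, u ≠ w → ¬ G.Adj u w) with hF
  have hne : F.Nonempty := ⟨∅, by simp [hF]⟩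
  obtain ⟨S, hSF, hSmax⟩ := F.exists_max_image Finset.card hne
  have hSindep : ∀ u ∈ S, ∀ w ∈ S, u ≠ w → ¬ G.Adj u w := (mem_filter.mp hSF).2
  by_cases hbig : n ≤ S.card
  · obtain ⟨T, hTS, hTcard⟩ := Finset.exists_subset_card_eq hbig
    exact Or.inl ⟨T, hTcard, fun u hu w hw => hSindep u (hTS hu) w (hTS hw)⟩
  by_cases hcl : ∃ C : Finset V, G.IsNClique (k + 1 + 1) C
  · exact Or.inr hcl
  exfalso
  push_neg at hcl
  -- every clique has at most k+1 vertices
  have hclique_bound : ∀ C : Finset V, (∀ u ∈ C, ∀ w ∈ C, u ≠ w → G.Adj u w) →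
      C.card ≤ k + 1 := by
    intro C hC
    by_contra hlt
    push_neg at hlt
    obtain ⟨C', hC'C, hC'card⟩ := Finset.exists_subset_card_eq hlt
    exact hcl C' ⟨fun u hu w hw huw => hC u (hC'C hu) w (hC'C hw) huw, hC'card⟩
  -- common neighbourhoods of pairs in S are small
  have hPbound : ∀ a b : V, a ∈ S → b ∈ S → a ≠ b →
      (univ.filter (fun v => G.Adj a v ∧ G.Adj b v)).card ≤ k := by
    intro a b haS hbS hab
    set Q := univ.filter (fun v => G.Adj a v ∧ G.Adj b v) with hQ
    have haQ : a ∉ Q := by simp [hQ]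
    have hclique : ∀ u ∈ insert a Q, ∀ w ∈ insert a Q, u ≠ w → G.Adj u w := by
      intro u hu w hw huw
      simp only [mem_insert, hQ, mem_filter, mem_univ, true_and] at hu hw
      rcases hu with rfl | ⟨hu1, hu2⟩
      · rcases hw with rfl | ⟨hw1, hw2⟩
        · exact absurd rfl huw
        · exact hw1
      · rcases hw with rfl | ⟨hw1, hw2⟩
        · exact hu1.symm
        · by_contra huw'
          exact hC4' a b u w hab huw (hSindep a haS b hbS hab) huw' hu1 hu2.symm hw2 hw1.symm
    have := hclique_bound _ hclique
    rw [Finset.card_insert_of_notMem haQ] at this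
    omega
  -- private neighbourhoods are small
  have hTbound : ∀ a : V, a ∈ S →
      (univ.filter (fun v => v ∉ S ∧ G.Adj a v ∧ ∀ b ∈ S, b ≠ a → ¬ G.Adj b v)).card ≤ k := by
    intro a haS
    set T := univ.filter (fun v => v ∉ S ∧ G.Adj a v ∧ ∀ b ∈ S, b ≠ a → ¬ G.Adj b v) with hT
    have haT : a ∉ T := by simp [hT, haS]
    have hclique : ∀ u ∈ insert a T, ∀ w ∈ insert a T, u ≠ w → G.Adj u w := by
      intro u hu w hw huw
      simp only [mem_insert, hT, mem_filter, mem_univ, true_and] at hu hw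
      rcases hu with rfl | ⟨hu1, hu2, hu3⟩
      · rcases hw with rfl | ⟨hw1, hw2, hw3⟩
        · exact absurd rfl huw
        · exact hw2
      · rcases hw with rfl | ⟨hw1, hw2, hw3⟩
        · exact hu2.symm
        · -- otherwise we could enlarge S
          by_contra huw'
          have hunS : u ∉ S.erase a := fun h => hu1 (Finset.mem_of_mem_erase h)
          have hwnS : w ∉ insert u (S.erase a) := by
            simp only [mem_insert]
            rintro (rfl | h)
            · exact huw rfl
            · exact hw1 (Finset.mem_of_mem_erase h)
          set S' := insert w (insert u (S.erase a)) with hS'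
          have hS'F : S' ∈ F := by
            rw [hF, mem_filter]
            refine ⟨mem_powerset.mpr (subset_univ _), ?_⟩
            intro x hx y hy hxy
            simp only [hS', mem_insert, Finset.mem_erase] at hx hy
            rcases hx with rfl | rfl | ⟨hxa, hxS⟩ <;>
              rcases hy with rfl | rfl | ⟨hya, hyS⟩
            · exact absurd rfl hxy
            · exact fun h => huw' (G.adj_symm h)
            · exact fun h => hw3 y hyS hya (G.adj_symm h)
            · exact huw'
            · exact absurd rfl hxy
            · exact fun h => hu3 y hyS hya (G.adj_symm h)
            · exact fun h => hw3 x hxS hxa h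
            · exact fun h => hu3 x hxS hxa h
            · exact hSindep x hxS y hyS hxy
          have hcards : S'.card = S.card + 1 := by
            rw [hS', Finset.card_insert_of_notMem hwnS, Finset.card_insert_of_notMem hunS,
              Finset.card_erase_of_mem haS]
            have : 1 ≤ S.card := Finset.card_pos.mpr ⟨a, haS⟩
            omega
          have := hSmax S' hS'F
          omega
    have := hclique_bound _ hclique
    rw [Finset.card_insert_of_notMem haT] at this
    omega
  -- covering
  set A : Finset V := S.biUnion (fun a =>
    univ.filter (fun v => v ∉ S ∧ G.Adj a v ∧ ∀ b ∈ S, b ≠ a → ¬ G.Adj b v)) with hA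
  set B : Finset V := (S.powersetCard 2).biUnion (fun p =>
    univ.filter (fun v => ∀ a ∈ p, G.Adj a v)) with hB
  have hcover : (univ : Finset V) ⊆ S ∪ A ∪ B := by
    intro v _
    by_cases hvS : v ∈ S
    · exact Finset.mem_union_left _ (Finset.mem_union_left _ hvS)
    have hnbr : ∃ a ∈ S, G.Adj a v := by
      by_contra hno
      push_neg at hno
      have hS'F : insert v S ∈ F := by
        rw [hF, mem_filter]
        refine ⟨mem_powerset.mpr (subset_univ _), ?_⟩
        intro x hx y hy hxy
        simp only [mem_insert] at hx hy
        rcases hx with rfl | hx <;> rcases hy with rfl | hy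
        · exact absurd rfl hxy
        · exact fun h => hno y hy (G.adj_symm h)
        · exact hno x hx
        · exact hSindep x hx y hy hxy
      have := hSmax _ hS'F
      rw [Finset.card_insert_of_notMem hvS] at this
      omega
    obtain ⟨a, haS, hav⟩ := hnbr
    by_cases h2 : ∃ b ∈ S, b ≠ a ∧ G.Adj b v
    · obtain ⟨b, hbS, hba, hbv⟩ := h2
      refine Finset.mem_union_right _ (Finset.mem_biUnion.mpr ⟨{a, b}, ?_, ?_⟩)
      · rw [Finset.mem_powersetCard]
        refine ⟨?_, Finset.card_pair (fun h => hba h.symm)⟩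
        intro x hx
        simp only [mem_insert, mem_singleton] at hx
        rcases hx with rfl | rfl <;> assumption
      · simp only [mem_filter, mem_univ, true_and]
        intro c hc
        simp only [mem_insert, mem_singleton] at hc
        rcases hc with rfl | rfl
        · exact hav
        · exact hbv
    · push_neg at h2
      refine Finset.mem_union_left _ (Finset.mem_union_right _
        (Finset.mem_biUnion.mpr ⟨a, haS, ?_⟩))
      simp only [mem_filter, mem_univ, true_and]
      exact ⟨hvS, hav, h2⟩
  -- counting
  have hAcard : A.card ≤ S.card * k := by
    calc A.card ≤ ∑ a ∈ S, (univ.filter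
          (fun v => v ∉ S ∧ G.Adj a v ∧ ∀ b ∈ S, b ≠ a → ¬ G.Adj b v)).card :=
        Finset.card_biUnion_le
      _ ≤ ∑ _a ∈ S, k := Finset.sum_le_sum (fun a ha => hTbound a ha)
      _ = S.card * k := by rw [Finset.sum_const, smul_eq_mul]
  have hBcard : B.card ≤ Nat.choose S.card 2 * k := by
    calc B.card ≤ ∑ p ∈ S.powersetCard 2, (univ.filter (fun v => ∀ a ∈ p, G.Adj a v)).card :=
        Finset.card_biUnion_le
      _ ≤ ∑ _p ∈ S.powersetCard 2, k := by
          refine Finset.sum_le_sum (fun p hp => ?_)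
          rw [Finset.mem_powersetCard] at hp
          obtain ⟨hpS, hp2⟩ := hp
          obtain ⟨a, b, hab, rfl⟩ := Finset.card_eq_two.mp hp2
          have haS : a ∈ S := hpS (by simp)
          have hbS : b ∈ S := hpS (by simp)
          refine le_trans (Finset.card_le_card ?_) (hPbound a b haS hbS hab)
          intro v hv
          simp only [mem_filter, mem_univ, true_and] at hv ⊢
          exact ⟨hv a (by simp), hv b (by simp)⟩
      _ = Nat.choose S.card 2 * k := by
          rw [Finset.sum_const, smul_eq_mul, Finset.card_powersetCard]
  have htotal : Fintype.card V ≤ S.card + S.card * k + Nat.choose S.card 2 * k := by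
    calc Fintype.card V = (univ : Finset V).card := (Finset.card_univ).symm
      _ ≤ (S ∪ A ∪ B).card := Finset.card_le_card hcover
      _ ≤ (S ∪ A).card + B.card := Finset.card_union_le _ _
      _ ≤ S.card + A.card + B.card := by
          exact add_le_add_left (Finset.card_union_le _ _) _
      _ ≤ S.card + S.card * k + Nat.choose S.card 2 * k := by
          exact add_le_add (add_le_add_right hAcard _) hBcard
  -- final arithmetic
  obtain ⟨m, rfl⟩ : ∃ m, n = m + 1 := ⟨n - 1, by omega⟩
  have hs : S.card ≤ m := by omega
  have h1 : Nat.choose (m + 1) 2 = m + Nat.choose m 2 := by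
    rw [Nat.choose_succ_succ, Nat.choose_one_right]
  have h2 : S.card * k ≤ m * k := Nat.mul_le_mul_right _ hs
  have h3 : Nat.choose S.card 2 * k ≤ Nat.choose m 2 * k :=
    Nat.mul_le_mul_right _ (Nat.choose_le_choose _ hs)
  simp only [Nat.add_sub_cancel] at hcard
  rw [h1, Nat.add_mul] at hcard
  have := le_trans hcard htotal
  omega
end

section
/- Every P4-free graph G satisfies χ(G) = ω(G). -/
open SimpleGraph Finset

universe u

/-- In a `P₄`-free graph, a maximum independent set meets every maximum clique
(provided the clique is nonempty). -/
lemma p4free_maxIndep_meets_maxClique {V : Type u} [Fintype V] (G : SimpleGraph V)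
    (hP4 : ¬ Nonempty (SimpleGraph.pathGraph 4 ↪g G))
    {I K : Finset V} (hI : Gᶜ.IsMaximumClique I) (hK : G.IsMaximumClique K)
    (hKne : K.Nonempty) : ∃ x, x ∈ I ∧ x ∈ K := by
  classical
  by_contra hdisj
  push_neg at hdisj
  -- every vertex of K has a neighbor in I
  have h1 : ∀ k ∈ K, ∃ i ∈ I, G.Adj k i := by
    intro k hk
    by_contra hno
    push_neg at hno
    have hkI : k ∉ I := fun h => hdisj k h hk
    have : Gᶜ.IsClique (insert k (I : Set V)) := by
      refine hI.isClique.insert ?_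
      intro b hb hbk
      exact ⟨hbk, fun hadj => hno b hb hadj⟩
    have hcard := hI.maximum (insert k I) (by simpa using this)
    rw [Finset.card_insert_of_notMem hkI] at hcard
    omega
  -- every vertex of I has a non-neighbor in K
  have h2 : ∀ i ∈ I, ∃ k ∈ K, ¬ G.Adj i k := by
    intro i hi
    by_contra hno
    push_neg at hno
    have hiK : i ∉ K := fun h => hdisj i hi h
    have : G.IsClique (insert i (K : Set V)) := by
      refine hK.isClique.insert ?_
      intro b hb hbk
      exact hno b hb
    have hcard := hK.maximum (insert i K) (by simpa using this)
    rw [Finset.card_insert_of_notMem hiK] at hcard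
    omega
  -- I is nonempty
  have hIne : I.Nonempty := by
    obtain ⟨k, hk⟩ := hKne
    obtain ⟨i, hi, _⟩ := h1 k hk
    exact ⟨i, hi⟩
  -- choose i0 ∈ I maximizing the number of neighbors in K
  obtain ⟨i0, hi0, hmax⟩ := I.exists_max_image (fun i => (K.filter (fun k => G.Adj i k)).card) hIne
  obtain ⟨k', hk', hik'⟩ := h2 i0 hi0
  obtain ⟨i', hi', hk'i'⟩ := h1 k' hk'
  have hii' : i0 ≠ i' := by
    rintro rfl
    exact hik' hk'i'.symm
  -- there is a k ∈ K adjacent to i0 but not to i'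
  have hkey : ∃ k ∈ K, G.Adj i0 k ∧ ¬ G.Adj i' k := by
    by_contra hno
    push_neg at hno
    have hsub : insert k' (K.filter (fun k => G.Adj i0 k)) ⊆ K.filter (fun k => G.Adj i' k) := by
      intro x hx
      rcases Finset.mem_insert.mp hx with rfl | hx
      · exact Finset.mem_filter.mpr ⟨hk', hk'i'.symm⟩
      · obtain ⟨hxK, hxadj⟩ := Finset.mem_filter.mp hx
        exact Finset.mem_filter.mpr ⟨hxK, hno x hxK hxadj⟩
    have hnotmem : k' ∉ K.filter (fun k => G.Adj i0 k) := by
      simp [hik']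
    have := Finset.card_le_card hsub
    rw [Finset.card_insert_of_notMem hnotmem] at this
    have := hmax i' hi'
    omega
  obtain ⟨k, hk, hi0k, hi'k⟩ := hkey
  -- assemble the induced P4 : i0 - k - k' - i'
  have hkk' : k ≠ k' := by rintro rfl; exact hik' hi0k
  have hkadjk' : G.Adj k k' := hK.isClique hk hk' hkk'
  have hi0i' : ¬ G.Adj i0 i' := (hI.isClique hi0 hi' hii').2
  have hi0K : i0 ∉ K := fun h => hdisj i0 hi0 h
  have hi'K : i' ∉ K := fun h => hdisj i' hi' h
  have n1 : ¬ G.Adj k' i0 := fun h => hik' h.symm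
  have n2 : ¬ G.Adj k i' := fun h => hi'k h.symm
  have n3 : ¬ G.Adj i' i0 := fun h => hi0i' h.symm
  have a1 : G.Adj k i0 := hi0k.symm
  have a2 : G.Adj k' k := hkadjk'.symm
  have a3 : G.Adj i' k' := hk'i'.symm
  refine hP4 ⟨⟨⟨![i0, k, k', i'], ?_⟩, ?_⟩⟩
  · intro a b hab
    have d1 : i0 ≠ k := G.ne_of_adj hi0k
    have d2 : i0 ≠ k' := fun h => hi0K (h ▸ hk')
    have d3 : k ≠ i' := fun h => hi'K (h ▸ hk)
    have d4 : k' ≠ i' := G.ne_of_adj hk'i'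
    fin_cases a <;> fin_cases b <;> simp_all
  · intro a b
    fin_cases a <;> fin_cases b <;>
      simp [pathGraph_adj, hi0k, hik', hi0i', hkadjk', hi'k, hk'i', n1, n2, n3, a1, a2, a3,
        G.loopless.irrefl _] <;> assumption

/-- Adding one color for an independent set. -/
lemma colorable_succ_of_indep {V : Type u} [Fintype V] (G : SimpleGraph V) (I : Finset V)
    (hI : Gᶜ.IsClique (I : Set V)) {m : ℕ}
    (h : (G.induce {v | v ∉ I}).Colorable m) : G.Colorable (m + 1) := by
  classical
  obtain ⟨C⟩ := h
  refine ⟨SimpleGraph.Coloring.mk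
    (fun v => if hv : v ∈ I then Fin.last m else (C ⟨v, hv⟩).castSucc) ?_⟩
  intro u v huv
  split_ifs with hu hv hv
  · exact absurd huv (hI hu hv (G.ne_of_adj huv)).2
  · exact fun h => (Fin.castSucc_lt_last _).ne' h
  · exact fun h => (Fin.castSucc_lt_last _).ne h
  · intro h
    exact C.valid (by simpa using huv) (Fin.castSucc_injective _ h)

lemma p4free_colorable : ∀ (n : ℕ) (V : Type u) [Fintype V] (G : SimpleGraph V),
    Fintype.card V ≤ n → ¬ Nonempty (SimpleGraph.pathGraph 4 ↪g G) →
    G.Colorable G.cliqueNum := by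
  intro n
  induction n with
  | zero =>
    intro V _ G hcard _
    have : IsEmpty V := Fintype.card_eq_zero_iff.mp (Nat.le_zero.mp hcard)
    exact SimpleGraph.Colorable.of_isEmpty (G := G) _
  | succ n ih =>
    intro V _ G hcard hP4
    classical
    rcases isEmpty_or_nonempty V with hV | hV
    · exact SimpleGraph.Colorable.of_isEmpty (G := G) _
    -- maximum independent set
    obtain ⟨I, hI⟩ := Gᶜ.maximumClique_exists
    have hIne : I.Nonempty := by
      obtain ⟨v⟩ := hV
      have h1 : (1 : ℕ) ≤ I.card := by
        have := hI.maximum {v} (by simp)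
        simpa using this
      exact Finset.card_pos.mp h1
    set s : Set V := {v | v ∉ I} with hs
    have hcard' : Fintype.card s ≤ n := by
      obtain ⟨i, hi⟩ := hIne
      have hlt : Fintype.card s < Fintype.card V :=
        Fintype.card_subtype_lt (x := i) (by simp [hs, hi])
      omega
    have hP4' : ¬ Nonempty (SimpleGraph.pathGraph 4 ↪g G.induce s) :=
      fun ⟨e⟩ => hP4 ⟨(SimpleGraph.Embedding.induce s).comp e⟩
    have hcol := ih s (G.induce s) hcard' hP4'
    -- clique number of induced graph is less than that of G
    have hω1 : 1 ≤ G.cliqueNum := by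
      obtain ⟨v⟩ := hV
      have hvc : G.IsClique (({v} : Finset V) : Set V) := by simp
      have : ({v} : Finset V).card ≤ G.cliqueNum :=
        @SimpleGraph.IsClique.card_le_cliqueNum V G _ {v} hvc
      simpa using this
    have hωlt : (G.induce s).cliqueNum < G.cliqueNum := by
      obtain ⟨t, ht⟩ := (G.induce s).exists_isNClique_cliqueNum
      set t' : Finset V := t.image Subtype.val with ht'
      have hcardt' : t'.card = (G.induce s).cliqueNum := by
        rw [ht', Finset.card_image_of_injective _ Subtype.val_injective, ht.card_eq]
      have hclique : G.IsClique (t' : Set V) := by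
        intro x hx y hy hxy
        simp only [ht', Finset.coe_image, Set.mem_image, Finset.mem_coe] at hx hy
        obtain ⟨x', hx', rfl⟩ := hx
        obtain ⟨y', hy', rfl⟩ := hy
        have := ht.isClique hx' hy' (fun h => hxy (by rw [h]))
        simpa using this
      have hle : t'.card ≤ G.cliqueNum := @SimpleGraph.IsClique.card_le_cliqueNum V G _ t' hclique
      rcases lt_or_eq_of_le hle with h | h
      · omega
      · -- t' is a maximum clique of G, disjoint from I: contradiction
        exfalso
        have hKmax : G.IsMaximumClique t' := by
          refine ⟨hclique, fun u hu => ?_⟩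
          rw [h]
          exact @SimpleGraph.IsClique.card_le_cliqueNum V G _ u hu
        have hKne : t'.Nonempty := Finset.card_pos.mp (by omega)
        obtain ⟨x, hxI, hxK⟩ := p4free_maxIndep_meets_maxClique G hP4 hI hKmax hKne
        simp only [ht', Finset.mem_image] at hxK
        obtain ⟨⟨x', hx's⟩, _, rfl⟩ := hxK
        exact hx's hxI
    have := colorable_succ_of_indep G I hI.isClique hcol
    exact this.mono (by omega)

/-- Every `P₄`-free graph (no induced path on 4 vertices) satisfies `χ(G) = ω(G)`. -/
theorem p4_free_chromatic_eq_clique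
    (V : Type*) [Fintype V] (G : SimpleGraph V)
    (hP4 : ¬ Nonempty (SimpleGraph.pathGraph 4 ↪g G)) :
    G.chromaticNumber = (G.cliqueNum : ℕ∞) := by
  refine le_antisymm ?_ ?_
  · exact (p4free_colorable (Fintype.card V) V G le_rfl hP4).chromaticNumber_le
  · obtain ⟨K, hK⟩ := G.exists_isNClique_cliqueNum
    have := hK.isClique.card_le_chromaticNumber
    rwa [hK.card_eq] at this
end
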